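/- E[min{X, δ + Y + Z}] = (1/4)(8 + 4δ − e^{δ}(5 − 2δ)) if δ < 0, and (1/4)(4 − e^{−δ}) if δ ≥ 0, where X, Y, Z are independent Exp(1) random variables. -/

import Mathlib

open Real MeasureTheory ProbabilityTheory

section Aux
open Set Filter Topology
open scoped ENNReal NNReal

noncomputable def fA (t : ℝ) : ℝ := if t ≤ 0 then t else 1 - exp (-t)
noncomputable def hB (s : ℝ) : ℝ := if s ≤ 0 then s + 1 - exp s / 2 else 1 - exp (-s) / 2

lemma measurable_fA : Measurable fA := by
  unfold fA
  exact Measurable.ite measurableSet_Iic measurable_id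
    (measurable_const.sub (measurable_id.neg.exp))

lemma abs_fA_le (t : ℝ) : |fA t| ≤ |t| := by
  unfold fA
  split_ifs with h
  · exact le_rfl
  · push_neg at h
    have h1 := Real.add_one_le_exp (-t)
    have h3 : exp (-t) ≤ 1 := by
      rw [show (1:ℝ) = exp 0 by simp]
      exact exp_le_exp.2 (by linarith)
    rw [abs_of_nonneg (by linarith), abs_of_pos h]
    linarith

lemma int_exp_Ioi (a : ℝ) : IntegrableOn (fun x => exp (-x)) (Ioi a) := by
  have h := exp_neg_integrableOn_Ioi a (by norm_num : (0:ℝ) < 1)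
  simpa [neg_mul, one_mul] using h

lemma int_exp2_Ioi (a : ℝ) : IntegrableOn (fun x => exp (-(2*x))) (Ioi a) := by
  have h := exp_neg_integrableOn_Ioi a (by norm_num : (0:ℝ) < 2)
  simpa [neg_mul] using h

lemma tendsto_exp_neg2 : Tendsto (fun x : ℝ => exp (-(2*x))) atTop (𝓝 0) :=
  tendsto_exp_neg_atTop_nhds_zero.comp (tendsto_id.const_mul_atTop (by norm_num : (0:ℝ) < 2))

lemma exp_tail (a : ℝ) : ∫ x in Ioi a, exp (-x) = exp (-a) := integral_exp_neg_Ioi a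

lemma hasDerivAt_exp2 (x : ℝ) : HasDerivAt (fun x : ℝ => -exp (-(2*x)) / 2) (exp (-(2*x))) x := by
  have h : HasDerivAt (fun x : ℝ => -(2*x)) (-2) x := by
    simpa using ((hasDerivAt_id x).const_mul (2:ℝ)).fun_neg
  refine (h.exp.fun_neg.div_const 2).congr_deriv ?_
  ring

lemma exp2_tail (a : ℝ) : ∫ x in Ioi a, exp (-(2*x)) = exp (-(2*a)) / 2 := by
  rw [integral_Ioi_of_hasDerivAt_of_tendsto' (fun x _ => hasDerivAt_exp2 x) (int_exp2_Ioi a)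
    (by simpa using (tendsto_exp_neg2.neg.div_const 2))]
  ring

lemma int_tail (a c : ℝ) : IntegrableOn (fun z => exp (-z) - c * exp (-(2*z))) (Ioi a) :=
  (int_exp_Ioi a).sub ((int_exp2_Ioi a).const_mul c)

lemma tail_eval (a c : ℝ) :
    ∫ z in Ioi a, (exp (-z) - c * exp (-(2*z))) = exp (-a) - c * (exp (-(2*a)) / 2) := by
  rw [integral_sub (int_exp_Ioi a) ((int_exp2_Ioi a).const_mul c), integral_const_mul,
    exp_tail, exp2_tail]

lemma key_prod (s z : ℝ) :
    (1 - exp (-(s+z))) * exp (-z) = exp (-z) - exp (-s) * exp (-(2*z)) := by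
  have h : -(s+z) + -z = -s + -(2*z) := by ring
  rw [sub_mul, one_mul, ← exp_add, h, exp_add]

lemma hasDerivAt_poly_exp (c x : ℝ) :
    HasDerivAt (fun x : ℝ => -(c + x + 1) * exp (-x)) ((c + x) * exp (-x)) x := by
  have h1 : HasDerivAt (fun x : ℝ => -(c + x + 1)) (-1) x := by
    simpa using (((hasDerivAt_id x).const_add c).add_const 1).fun_neg
  have h2 : HasDerivAt (fun x : ℝ => exp (-x)) (exp (-x) * (-1)) x := (hasDerivAt_neg x).exp
  refine (h1.fun_mul h2).congr_deriv ?_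
  ring

lemma hasDerivAt_xexp (x : ℝ) :
    HasDerivAt (fun x : ℝ => -(x + 1) * exp (-x)) (x * exp (-x)) x := by
  have h1 : HasDerivAt (fun x : ℝ => -(x + 1)) (-1) x := by
    simpa using ((hasDerivAt_id x).add_const 1).fun_neg
  have h2 : HasDerivAt (fun x : ℝ => exp (-x)) (exp (-x) * (-1)) x := (hasDerivAt_neg x).exp
  refine (h1.fun_mul h2).congr_deriv ?_
  ring

lemma hasDerivAt_aux3 (δ y : ℝ) :
    HasDerivAt (fun y : ℝ => -(δ + 1 + y + 1) * exp (-y) - exp δ * y / 2)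
      ((δ + y + 1) * exp (-y) - exp δ / 2) y := by
  have h1 := hasDerivAt_poly_exp (δ + 1) y
  have h2 : HasDerivAt (fun y : ℝ => exp δ * y / 2) (exp δ / 2) y := by
    simpa using ((hasDerivAt_id y).const_mul (exp δ)).div_const 2
  refine (h1.fun_sub h2).congr_deriv ?_
  ring

lemma aux1 (t : ℝ) : ∫ x in Ioi (0:ℝ), min x t * exp (-x) = fA t := by
  unfold fA
  split_ifs with ht
  · rw [setIntegral_congr_fun measurableSet_Ioi
      (fun x hx => by rw [min_eq_right (ht.trans (le_of_lt hx))] :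
        ∀ x ∈ Ioi (0:ℝ), min x t * exp (-x) = t * exp (-x)),
      integral_const_mul, exp_tail]
    simp
  · push_neg at ht
    have hsplit : Ioc (0:ℝ) t ∪ Ioi t = Ioi 0 := Ioc_union_Ioi_eq_Ioi ht.le
    have hdisj : Disjoint (Ioc (0:ℝ) t) (Ioi t) := Ioc_disjoint_Ioi le_rfl
    have hcont : Continuous fun x : ℝ => min x t * exp (-x) :=
      (continuous_id.min continuous_const).mul (continuous_neg.rexp)
    have hint2 : IntegrableOn (fun x => min x t * exp (-x)) (Ioi t) := by
      have h0 : IntegrableOn (fun x => t * exp (-x)) (Ioi t) := (int_exp_Ioi t).const_mul t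
      exact h0.congr_fun (fun x hx => by rw [min_eq_right (le_of_lt hx)]) measurableSet_Ioi
    rw [← hsplit, setIntegral_union hdisj measurableSet_Ioi
      (hcont.integrableOn_Ioc) hint2]
    have e1 : ∫ x in Ioc (0:ℝ) t, min x t * exp (-x) = 1 - (t+1) * exp (-t) := by
      rw [setIntegral_congr_fun measurableSet_Ioc
        (fun x hx => by rw [min_eq_left hx.2] :
          ∀ x ∈ Ioc (0:ℝ) t, min x t * exp (-x) = x * exp (-x)),
        ← intervalIntegral.integral_of_le ht.le]
      rw [intervalIntegral.integral_eq_sub_of_hasDerivAt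
        (fun x _ => hasDerivAt_xexp x)
        (((continuous_id.mul continuous_neg.rexp)).intervalIntegrable 0 t)]
      simp; ring
    have e2 : ∫ x in Ioi t, min x t * exp (-x) = t * exp (-t) := by
      rw [setIntegral_congr_fun measurableSet_Ioi
        (fun x hx => by rw [min_eq_right (le_of_lt hx)] :
          ∀ x ∈ Ioi t, min x t * exp (-x) = t * exp (-x)),
        integral_const_mul, exp_tail]
    rw [e1, e2]; ring

lemma aux2 (s : ℝ) : ∫ z in Ioi (0:ℝ), fA (s + z) * exp (-z) = hB s := by
  unfold hB
  split_ifs with hs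
  · have h0 : (0:ℝ) ≤ -s := by linarith
    have hsplit : Ioc (0:ℝ) (-s) ∪ Ioi (-s) = Ioi 0 := Ioc_union_Ioi_eq_Ioi h0
    have hdisj : Disjoint (Ioc (0:ℝ) (-s)) (Ioi (-s)) := Ioc_disjoint_Ioi le_rfl
    have heq1 : ∀ z ∈ Ioc (0:ℝ) (-s), fA (s + z) * exp (-z) = (s + z) * exp (-z) := by
      intro z hz
      rw [fA, if_pos (by linarith [hz.2])]
    have heq2 : ∀ z ∈ Ioi (-s), fA (s + z) * exp (-z) = exp (-z) - exp (-s) * exp (-(2*z)) := by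
      intro z hz
      rw [fA, if_neg (by simp only [mem_Ioi] at hz; push_neg; linarith), key_prod]
    have hint1 : IntegrableOn (fun z => fA (s + z) * exp (-z)) (Ioc 0 (-s)) := by
      have hc : IntegrableOn (fun z => (s + z) * exp (-z)) (Ioc 0 (-s)) :=
        (((continuous_const.add continuous_id).mul continuous_neg.rexp)).integrableOn_Ioc
      exact hc.congr_fun (fun z hz => (heq1 z hz).symm) measurableSet_Ioc
    have hint2 : IntegrableOn (fun z => fA (s + z) * exp (-z)) (Ioi (-s)) :=
      (int_tail (-s) (exp (-s))).congr_fun (fun z hz => (heq2 z hz).symm) measurableSet_Ioi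
    rw [← hsplit, setIntegral_union hdisj measurableSet_Ioi hint1 hint2]
    have e1 : ∫ z in Ioc (0:ℝ) (-s), fA (s + z) * exp (-z) = s + 1 - exp s := by
      rw [setIntegral_congr_fun measurableSet_Ioc heq1, ← intervalIntegral.integral_of_le h0,
        intervalIntegral.integral_eq_sub_of_hasDerivAt
          (fun x _ => hasDerivAt_poly_exp s x)
          (((continuous_const.add continuous_id).mul continuous_neg.rexp).intervalIntegrable 0 (-s))]
      simp; ring
    have e2 : ∫ z in Ioi (-s), fA (s + z) * exp (-z) = exp s / 2 := by
      rw [setIntegral_congr_fun measurableSet_Ioi heq2, tail_eval, neg_neg,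
        show -(2 * -s) = s + s by ring]
      have h1 : exp (-s) * exp (s + s) = exp s := by rw [← exp_add]; congr 1; ring
      rw [mul_div_assoc'] at *
      rw [h1]
      ring
    rw [e1, e2]; ring
  · push_neg at hs
    have heq : ∀ z ∈ Ioi (0:ℝ), fA (s + z) * exp (-z) = exp (-z) - exp (-s) * exp (-(2*z)) := by
      intro z hz
      rw [fA, if_neg (by simp only [mem_Ioi] at hz; push_neg; linarith), key_prod]
    rw [setIntegral_congr_fun measurableSet_Ioi heq, tail_eval]
    norm_num
    ring

lemma aux3 (δ : ℝ) : ∫ y in Ioi (0:ℝ), hB (δ + y) * exp (-y) =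
    if δ < 0 then (1 / 4) * (8 + 4 * δ - exp δ * (5 - 2 * δ))
    else (1 / 4) * (4 - exp (-δ)) := by
  split_ifs with hd
  · have h0 : (0:ℝ) ≤ -δ := by linarith
    have hsplit : Ioc (0:ℝ) (-δ) ∪ Ioi (-δ) = Ioi 0 := Ioc_union_Ioi_eq_Ioi h0
    have hdisj : Disjoint (Ioc (0:ℝ) (-δ)) (Ioi (-δ)) := Ioc_disjoint_Ioi le_rfl
    have heq1 : ∀ y ∈ Ioc (0:ℝ) (-δ), hB (δ + y) * exp (-y)
        = (δ + y + 1) * exp (-y) - exp δ / 2 := by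
      intro y hy
      rw [hB, if_pos (by linarith [hy.2])]
      have h2 : exp (δ + y) * exp (-y) = exp δ := by rw [← exp_add]; congr 1; ring
      linear_combination (-(1:ℝ)/2) * h2
    have heq2 : ∀ y ∈ Ioi (-δ), hB (δ + y) * exp (-y)
        = exp (-y) - (exp (-δ) / 2) * exp (-(2*y)) := by
      intro y hy
      simp only [mem_Ioi] at hy
      rw [hB, if_neg (by push_neg; linarith)]
      have h2 : exp (-(δ + y)) * exp (-y) = exp (-δ) * exp (-(2*y)) := by
        rw [← exp_add, ← exp_add]; congr 1; ring
      linear_combination (-(1:ℝ)/2) * h2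
    have hint1 : IntegrableOn (fun y => hB (δ + y) * exp (-y)) (Ioc 0 (-δ)) := by
      have hc : IntegrableOn (fun y => (δ + y + 1) * exp (-y) - exp δ / 2) (Ioc 0 (-δ)) :=
        ((((continuous_const.add continuous_id).add continuous_const).mul
          continuous_neg.rexp).sub continuous_const).integrableOn_Ioc
      exact hc.congr_fun (fun y hy => (heq1 y hy).symm) measurableSet_Ioc
    have hint2 : IntegrableOn (fun y => hB (δ + y) * exp (-y)) (Ioi (-δ)) :=
      (int_tail (-δ) (exp (-δ) / 2)).congr_fun (fun y hy => (heq2 y hy).symm) measurableSet_Ioi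
    rw [← hsplit, setIntegral_union hdisj measurableSet_Ioi hint1 hint2]
    have e1 : ∫ y in Ioc (0:ℝ) (-δ), hB (δ + y) * exp (-y)
        = δ + 2 - 2 * exp δ + δ * exp δ / 2 := by
      rw [setIntegral_congr_fun measurableSet_Ioc heq1, ← intervalIntegral.integral_of_le h0,
        intervalIntegral.integral_eq_sub_of_hasDerivAt (fun y _ => hasDerivAt_aux3 δ y)
          (((((continuous_const.add continuous_id).add continuous_const).mul
            continuous_neg.rexp).sub continuous_const).intervalIntegrable 0 (-δ))]
      rw [neg_neg]
      simp only [neg_zero, exp_zero]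
      ring_nf
    have e2 : ∫ y in Ioi (-δ), hB (δ + y) * exp (-y) = 3 / 4 * exp δ := by
      rw [setIntegral_congr_fun measurableSet_Ioi heq2, tail_eval, neg_neg,
        show -(2 * -δ) = δ + δ by ring]
      have h1 : exp (-δ) * exp (δ + δ) = exp δ := by rw [← exp_add]; congr 1; ring
      linear_combination (-(1:ℝ)/4) * h1
    rw [e1, e2]; ring
  · push_neg at hd
    have heq : ∀ y ∈ Ioi (0:ℝ), hB (δ + y) * exp (-y)
        = exp (-y) - (exp (-δ) / 2) * exp (-(2*y)) := by
      intro y hy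
      simp only [mem_Ioi] at hy
      rw [hB, if_neg (by push_neg; linarith)]
      have h2 : exp (-(δ + y)) * exp (-y) = exp (-δ) * exp (-(2*y)) := by
        rw [← exp_add, ← exp_add]; congr 1; ring
      linear_combination (-(1:ℝ)/2) * h2
    rw [setIntegral_congr_fun measurableSet_Ioi heq, tail_eval]
    norm_num
    ring

lemma expM_eq : expMeasure 1
    = volume.withDensity (fun x => ENNReal.ofReal (if 0 ≤ x then exp (-x) else 0)) := by
  rw [expMeasure, gammaMeasure]
  congr 1
  funext x
  rw [show gammaPDF 1 1 x = exponentialPDF 1 x from rfl, exponentialPDF_eq]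
  norm_num

lemma expM_integral (g : ℝ → ℝ) :
    ∫ x, g x ∂(expMeasure 1) = ∫ x in Ioi 0, g x * exp (-x) := by
  have hd : Measurable (fun x : ℝ => (if 0 ≤ x then exp (-x) else 0).toNNReal) :=
    (Measurable.ite measurableSet_Ici (measurable_id.neg.exp) measurable_const).real_toNNReal
  rw [expM_eq,
    show (fun x : ℝ => ENNReal.ofReal (if 0 ≤ x then exp (-x) else 0))
      = (fun x : ℝ => ((if 0 ≤ x then exp (-x) else 0).toNNReal : ℝ≥0∞)) from rfl,
    integral_withDensity_eq_integral_smul hd g]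
  have key : ∀ x : ℝ, (if 0 ≤ x then exp (-x) else 0).toNNReal • g x
      = (Ici (0:ℝ)).indicator (fun x => g x * exp (-x)) x := by
    intro x
    by_cases hx : 0 ≤ x
    · rw [if_pos hx, indicator_of_mem (mem_Ici.2 hx)]
      simp [NNReal.smul_def, Real.coe_toNNReal _ (exp_nonneg _), mul_comm]
    · rw [if_neg hx, indicator_of_notMem (by simpa using hx)]
      simp
  simp_rw [key]
  rw [integral_indicator measurableSet_Ici, integral_Ici_eq_integral_Ioi]

lemma expM_integrable {g : ℝ → ℝ}
    (h : IntegrableOn (fun x => g x * exp (-x)) (Ioi 0)) : Integrable g (expMeasure 1) := by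
  have hm : Measurable (fun x : ℝ => ENNReal.ofReal (if 0 ≤ x then exp (-x) else 0)) :=
    Measurable.ennreal_ofReal (Measurable.ite measurableSet_Ici (by fun_prop) measurable_const)
  rw [expM_eq, integrable_withDensity_iff hm (ae_of_all _ fun x => ENNReal.ofReal_lt_top)]
  have key : ∀ x : ℝ, g x * (ENNReal.ofReal (if 0 ≤ x then exp (-x) else 0)).toReal
      = (Ici (0:ℝ)).indicator (fun x => g x * exp (-x)) x := by
    intro x
    by_cases hx : 0 ≤ x
    · rw [if_pos hx, indicator_of_mem (mem_Ici.2 hx), ENNReal.toReal_ofReal (exp_nonneg _)]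
    · rw [if_neg hx, indicator_of_notMem (by simpa using hx)]
      simp
  simp_rw [key]
  rw [integrable_indicator_iff measurableSet_Ici]
  rw [integrableOn_Ici_iff_integrableOn_Ioi]
  exact h

lemma expM_Iio : expMeasure 1 (Iio 0) = 0 := by
  rw [expM_eq, withDensity_apply _ measurableSet_Iio]
  rw [setLIntegral_congr_fun measurableSet_Iio
    (fun x hx => by rw [if_neg (by exact not_le.2 hx)] :
      ∀ x ∈ Iio (0:ℝ), ENNReal.ofReal (if 0 ≤ x then exp (-x) else 0) = ENNReal.ofReal 0)]
  simp

lemma expM_moment : Integrable (fun x : ℝ => x) (expMeasure 1) := by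
  apply expM_integrable
  have h := Real.GammaIntegral_convergent (by norm_num : (0:ℝ) < 2)
  simpa [show (2:ℝ) - 1 = 1 by norm_num, rpow_one, mul_comm] using h

lemma ae_prod_fst (ρ σ : Measure ℝ) [SFinite ρ] [SFinite σ] (h : ρ (Iio 0) = 0) :
    ∀ᵐ p ∂ρ.prod σ, 0 ≤ p.1 := by
  rw [ae_iff, show {p : ℝ × ℝ | ¬0 ≤ p.1} = (Iio 0) ×ˢ (univ : Set ℝ) by ext p; simp [not_le],
    Measure.prod_prod, h, zero_mul]

lemma ae_prod_snd (ρ σ : Measure ℝ) [SFinite ρ] [SFinite σ] (h : σ (Iio 0) = 0) :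
    ∀ᵐ p ∂ρ.prod σ, 0 ≤ p.2 := by
  rw [ae_iff, show {p : ℝ × ℝ | ¬0 ≤ p.2} = (univ : Set ℝ) ×ˢ (Iio 0) by ext p; simp [not_le],
    Measure.prod_prod, h, mul_zero]

end Aux

/-- `E[min{X, δ+Y+Z}]` for independent `Exp(1)` random variables `X, Y, Z`. -/
theorem expectation_min {Ω : Type*} [MeasurableSpace Ω] (μ : Measure Ω)
    [IsProbabilityMeasure μ] (X Y Z : Ω → ℝ)
    (hX : Measurable X) (hY : Measurable Y) (hZ : Measurable Z)
    (hindep : iIndepFun ![X, Y, Z] μ)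
    (hXe : Measure.map X μ = expMeasure 1)
    (hYe : Measure.map Y μ = expMeasure 1)
    (hZe : Measure.map Z μ = expMeasure 1) (δ : ℝ) :
    ∫ ω, min (X ω) (δ + Y ω + Z ω) ∂μ =
      if δ < 0 then (1 / 4) * (8 + 4 * δ - exp δ * (5 - 2 * δ))
      else (1 / 4) * (4 - exp (-δ)) := by
  classical
  haveI hPe : IsProbabilityMeasure (expMeasure 1) := isProbabilityMeasure_expMeasure one_pos
  set W : Ω → ℝ := fun ω => Y ω + Z ω with hWdef
  have hW : Measurable W := hY.add hZ
  set ν : Measure ℝ := μ.map W with hνdef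
  haveI : IsProbabilityMeasure ν := Measure.isProbabilityMeasure_map hW.aemeasurable
  -- independence facts
  have hmeas3 : ∀ i, Measurable (![X, Y, Z] i) := by
    intro i
    fin_cases i <;> simpa using ‹_›
  have hIXW : IndepFun X W μ := by
    have h := hindep.indepFun_add_right hmeas3 0 1 2 (by decide) (by decide)
    simp at h; exact h
  have hIYZ : IndepFun Y Z μ := by
    have h := hindep.indepFun (show (1 : Fin 3) ≠ 2 by decide)
    simpa using h
  have hmapXW : μ.map (fun ω => (X ω, W ω)) = (expMeasure 1).prod ν := by
    rw [hνdef, ← hXe]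
    exact (indepFun_iff_map_prod_eq_prod_map_map hX.aemeasurable hW.aemeasurable).1 hIXW
  have hmapYZ : μ.map (fun ω => (Y ω, Z ω)) = (expMeasure 1).prod (expMeasure 1) := by
    rw [show (expMeasure 1).prod (expMeasure 1) = (μ.map Y).prod (μ.map Z) by rw [hYe, hZe]]
    exact (indepFun_iff_map_prod_eq_prod_map_map hY.aemeasurable hZ.aemeasurable).1 hIYZ
  -- nonnegativity facts
  have hY0 : μ (Y ⁻¹' Set.Iio 0) = 0 := by
    rw [← Measure.map_apply hY measurableSet_Iio, hYe, expM_Iio]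
  have hZ0 : μ (Z ⁻¹' Set.Iio 0) = 0 := by
    rw [← Measure.map_apply hZ measurableSet_Iio, hZe, expM_Iio]
  have hν0 : ν (Set.Iio 0) = 0 := by
    rw [hνdef, Measure.map_apply hW measurableSet_Iio]
    refine measure_mono_null (fun ω hω => ?_) (measure_union_null hY0 hZ0)
    simp only [Set.mem_preimage, Set.mem_Iio, Set.mem_union] at *
    by_contra hc
    push_neg at hc
    have hω' : Y ω + Z ω < 0 := hω
    linarith [hc.1, hc.2]
  -- integrability on the product spaces
  have hFmeas : Measurable fun p : ℝ × ℝ => min p.1 (δ + p.2) :=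
    measurable_fst.min (measurable_const.add measurable_snd)
  have hfst : Integrable (fun p : ℝ × ℝ => p.1) ((expMeasure 1).prod ν) := by
    have h := expM_moment.mul_prod (integrable_const (1:ℝ)) (ν := ν)
    simpa using h
  have hfst2 : Integrable (fun p : ℝ × ℝ => p.1) ((expMeasure 1).prod (expMeasure 1)) := by
    have h := expM_moment.mul_prod (integrable_const (1:ℝ)) (ν := expMeasure 1)
    simpa using h
  have hsnd2 : Integrable (fun p : ℝ × ℝ => p.2) ((expMeasure 1).prod (expMeasure 1)) := by
    have h := (integrable_const (1:ℝ)).mul_prod expM_moment (μ := expMeasure 1)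
    simpa using h
  have hg1 : Integrable (fun p : ℝ × ℝ => |δ| + p.1) ((expMeasure 1).prod ν) := by
    simpa using (integrable_const (|δ|) : Integrable _ ((expMeasure 1).prod ν)).add hfst
  have hInt1 : Integrable (fun p : ℝ × ℝ => min p.1 (δ + p.2)) ((expMeasure 1).prod ν) := by
    refine Integrable.mono' hg1 hFmeas.aestronglyMeasurable ?_
    filter_upwards [ae_prod_fst (expMeasure 1) ν expM_Iio, ae_prod_snd (expMeasure 1) ν hν0]
      with p h1 h2
    rw [Real.norm_eq_abs, abs_le]
    constructor
    · refine le_min ?_ ?_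
      · have := abs_nonneg δ; linarith
      · have := neg_abs_le δ; linarith
    · exact (min_le_left _ _).trans (by have := abs_nonneg δ; linarith)
  have hgmeas : Measurable fun q : ℝ × ℝ => fA (δ + q.1 + q.2) :=
    measurable_fA.comp ((measurable_const.add measurable_fst).add measurable_snd)
  have hg2 : Integrable (fun q : ℝ × ℝ => |δ| + q.1 + q.2) ((expMeasure 1).prod (expMeasure 1)) := by
    simpa [add_assoc] using
      ((integrable_const (|δ|) : Integrable _ ((expMeasure 1).prod (expMeasure 1))).fun_add
        hfst2).fun_add hsnd2
  have hInt2 : Integrable (fun q : ℝ × ℝ => fA (δ + q.1 + q.2))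
      ((expMeasure 1).prod (expMeasure 1)) := by
    refine Integrable.mono' hg2 hgmeas.aestronglyMeasurable ?_
    filter_upwards [ae_prod_fst (expMeasure 1) (expMeasure 1) expM_Iio,
      ae_prod_snd (expMeasure 1) (expMeasure 1) expM_Iio] with q h1 h2
    rw [Real.norm_eq_abs]
    calc |fA (δ + q.1 + q.2)| ≤ |δ + q.1 + q.2| := abs_fA_le _
      _ ≤ |δ| + q.1 + q.2 := by
          have h3 : |δ + q.1 + q.2| ≤ |δ| + |q.1 + q.2| := by
            rw [add_assoc]; exact abs_add_le _ _
          rw [abs_of_nonneg (by linarith : (0:ℝ) ≤ q.1 + q.2)] at h3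
          linarith
  -- the computation
  calc ∫ ω, min (X ω) (δ + Y ω + Z ω) ∂μ
      = ∫ ω, min (X ω) (δ + W ω) ∂μ := by
        refine integral_congr_ae (Filter.Eventually.of_forall fun ω => ?_)
        simp only [hWdef]
        rw [add_assoc]
    _ = ∫ p, min p.1 (δ + p.2) ∂(μ.map (fun ω => (X ω, W ω))) :=
        (integral_map (hX.prodMk hW).aemeasurable hFmeas.aestronglyMeasurable).symm
    _ = ∫ p, min p.1 (δ + p.2) ∂((expMeasure 1).prod ν) := by rw [hmapXW]
    _ = ∫ w, ∫ x, min x (δ + w) ∂(expMeasure 1) ∂ν := integral_prod_symm _ hInt1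
    _ = ∫ w, fA (δ + w) ∂ν := by
        refine integral_congr_ae (Filter.Eventually.of_forall fun w => ?_)
        show ∫ x, min x (δ + w) ∂(expMeasure 1) = fA (δ + w)
        rw [expM_integral, aux1]
    _ = ∫ ω, fA (δ + W ω) ∂μ := by
        have hgm1 : Measurable fun w : ℝ => fA (δ + w) :=
          measurable_fA.comp (measurable_const.add measurable_id)
        rw [hνdef]
        exact integral_map hW.aemeasurable hgm1.aestronglyMeasurable
    _ = ∫ q, fA (δ + q.1 + q.2) ∂((expMeasure 1).prod (expMeasure 1)) := by
        rw [← hmapYZ, integral_map (hY.prodMk hZ).aemeasurable hgmeas.aestronglyMeasurable]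
        refine integral_congr_ae (Filter.Eventually.of_forall fun ω => ?_)
        show fA (δ + W ω) = fA (δ + Y ω + Z ω)
        simp only [hWdef]
        rw [add_assoc]
    _ = ∫ y, ∫ z, fA (δ + y + z) ∂(expMeasure 1) ∂(expMeasure 1) := integral_prod _ hInt2
    _ = ∫ y, hB (δ + y) ∂(expMeasure 1) := by
        refine integral_congr_ae (Filter.Eventually.of_forall fun y => ?_)
        show ∫ z, fA (δ + y + z) ∂(expMeasure 1) = hB (δ + y)
        rw [expM_integral, aux2]
    _ = ∫ y in Set.Ioi 0, hB (δ + y) * exp (-y) := expM_integral _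
    _ = _ := aux3 δ
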